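/- arXiv:2311.14023 — 2 statements merged into one kernel-verified Lean document; each statement's English description precedes it below -/
import Mathlib

section
/- Let A be an n×n real SPSD matrix with eigenvalues λ₁ ≥ … ≥ λₙ ≥ 0, let Q ∈ ℝ^{n×ℓ} have orthonormal columns, let 1 ≤ k < n and ε ≥ 0. Suppose that there exists a matrix C ∈ ℝ^{ℓ×n} with rank(C) ≤ k such that ‖A − QC‖_F² ≤ (1+ε)‖A − A_(k)‖_F². Let Â := A^{1/2} P A^{1/2} be the Nyström approximation of A with respect to Q, where P is the orthogonal projection onto the column space of A^{1/2}Q. Then ‖A‖_F² − ‖Â_(k)‖_F² ≤ (1+ε)‖A − A_(k)‖_F². -/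
open Matrix BigOperators

/-- `M = U * diagonal μ * Uᵀ` is a spectral (eigen)decomposition of the symmetric matrix `M`,
with orthogonal `U` and eigenvalues `μ` listed in nonincreasing order. -/
def IsSpectralDecomp {n : ℕ} (M U : Matrix (Fin n) (Fin n) ℝ) (μ : Fin n → ℝ) : Prop :=
  Uᵀ * U = 1 ∧ Antitone μ ∧ M = U * Matrix.diagonal μ * Uᵀ

/-- Truncation of a spectral decomposition to its `k` largest (first `k`) eigenvalues:
the best rank-`k` approximation `M_(k)` associated with the decomposition `(U, μ)`. -/
noncomputable def trunc {n : ℕ} (k : ℕ) (U : Matrix (Fin n) (Fin n) ℝ) (μ : Fin n → ℝ) :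
    Matrix (Fin n) (Fin n) ℝ :=
  U * Matrix.diagonal (fun i : Fin n => if (i : ℕ) < k then μ i else 0) * Uᵀ

/-- `f` is operator monotone on SPSD matrices: for all `m` and all `m × m` SPSD matrices
`B ⪰ C ⪰ 0`, one has `f(B) ⪰ f(C)`, where matrix functions are computed through (any)
spectral decomposition. -/
def OperatorMonotone (f : ℝ → ℝ) : Prop :=
  ∀ (m : ℕ) (B C U V : Matrix (Fin m) (Fin m) ℝ) (β γ : Fin m → ℝ),
    IsSpectralDecomp B U β → IsSpectralDecomp C V γ →
    B.PosSemidef → C.PosSemidef → (B - C).PosSemidef →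
    (U * Matrix.diagonal (f ∘ β) * Uᵀ - V * Matrix.diagonal (f ∘ γ) * Vᵀ).PosSemidef

/-- Squared Frobenius norm `‖M‖_F² = Σ_{i,j} M_{ij}²`. -/
noncomputable def frobSq {m l : ℕ} (M : Matrix (Fin m) (Fin l) ℝ) : ℝ :=
  ∑ i, ∑ j, (M i j) ^ 2

/-- Frobenius norm. -/
noncomputable def frobNorm {m l : ℕ} (M : Matrix (Fin m) (Fin l) ℝ) : ℝ :=
  Real.sqrt (frobSq M)

/-- The eigenvalues of a Hermitian matrix listed in nonincreasing order:
`eigsDesc hM i` is the `(i+1)`-st largest eigenvalue of `M`. -/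
noncomputable def eigsDesc {m : ℕ} {M : Matrix (Fin m) (Fin m) ℝ} (hM : M.IsHermitian) :
    Fin m → ℝ :=
  fun i => (hM.eigenvalues ∘ Tuple.sort hM.eigenvalues) i.rev

/-- The singular values of `M` in nonincreasing order: `svDesc M i` is the `(i+1)`-st largest
singular value of `M`, i.e. the square root of the `(i+1)`-st largest eigenvalue of `MᴴM`. -/
noncomputable def svDesc {m l : ℕ} (M : Matrix (Fin m) (Fin l) ℝ) : Fin l → ℝ :=
  fun i => Real.sqrt (eigsDesc (show (Mᵀ * M).IsHermitian by
    simpa [Matrix.conjTranspose_eq_transpose_of_trivial] using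
      Matrix.isHermitian_conjTranspose_mul_self M) i)

/-- Nuclear norm: the sum of the singular values. -/
noncomputable def nuclearNorm {m l : ℕ} (M : Matrix (Fin m) (Fin l) ℝ) : ℝ :=
  ∑ i, svDesc M i

/-- Operator (spectral) norm: the largest singular value. -/
noncomputable def opNorm {m l : ℕ} (M : Matrix (Fin m) (Fin l) ℝ) : ℝ :=
  ⨆ i, svDesc M i

/-- `p`-th power of the Schatten `p`-norm: `‖M‖_(p)^p = Σᵢ σᵢ(M)^p`. -/
noncomputable def schattenPow {m l : ℕ} (p : ℝ) (M : Matrix (Fin m) (Fin l) ℝ) : ℝ :=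
  ∑ i, svDesc M i ^ p

/-- Schatten `p`-norm: `‖M‖_(p) = (Σᵢ σᵢ(M)^p)^(1/p)`. -/
noncomputable def schattenNorm {m l : ℕ} (p : ℝ) (M : Matrix (Fin m) (Fin l) ℝ) : ℝ :=
  (schattenPow p M) ^ (1 / p)

/-- The SPSD square root of an SPSD matrix (the definition `Matrix.PosSemidef.sqrt` of the
older Mathlib, restated here since it has been removed). -/
noncomputable def Matrix.PosSemidef.sqrt {n : Type*} [Fintype n] [DecidableEq n]
    {A : Matrix n n ℝ} (hA : A.PosSemidef) : Matrix n n ℝ :=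
  hA.1.eigenvectorUnitary.1 * diagonal (Real.sqrt ∘ hA.1.eigenvalues) *
    (star hA.1.eigenvectorUnitary : Matrix n n ℝ)

/-- `P` is the orthogonal projection onto the column space of `M`. -/
def IsOrthProjOnto {m l : ℕ} (P : Matrix (Fin m) (Fin m) ℝ) (M : Matrix (Fin m) (Fin l) ℝ) :
    Prop :=
  Pᵀ = P ∧ P * P = P ∧ P * M = M ∧ ∃ Y : Matrix (Fin l) (Fin m) ℝ, P = M * Y

lemma frobSq_eq_trace {m l : ℕ} (M : Matrix (Fin m) (Fin l) ℝ) :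
    frobSq M = (Mᵀ * M).trace := by
  simp [frobSq, Matrix.trace, Matrix.diag, Matrix.mul_apply, sq]
  exact Finset.sum_comm

lemma frobSq_nonneg {m l : ℕ} (M : Matrix (Fin m) (Fin l) ℝ) : 0 ≤ frobSq M := by
  apply Finset.sum_nonneg; intro i _; apply Finset.sum_nonneg; intro j _; positivity

lemma frobSq_sub {m l : ℕ} (X Y : Matrix (Fin m) (Fin l) ℝ) :
    frobSq (X - Y) = frobSq X - 2 * (Yᵀ * X).trace + frobSq Y := by
  have h : (Xᵀ * Y).trace = (Yᵀ * X).trace := by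
    rw [← Matrix.trace_transpose (Xᵀ * Y), Matrix.transpose_mul, Matrix.transpose_transpose]
  simp only [frobSq_eq_trace, Matrix.transpose_sub, Matrix.sub_mul, Matrix.mul_sub,
    Matrix.trace_sub]
  rw [h]; ring

lemma trace_sandwich {a b : ℕ} (E : Matrix (Fin a) (Fin a) ℝ) (Y : Matrix (Fin a) (Fin b) ℝ) :
    ((E * Y)ᵀ * (E * Y)).trace = ((Eᵀ * E) * (Y * Yᵀ)).trace := by
  rw [Matrix.transpose_mul]
  rw [show Yᵀ * Eᵀ * (E * Y) = Yᵀ * ((Eᵀ * E) * Y) by simp [Matrix.mul_assoc]]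
  rw [Matrix.trace_mul_comm, Matrix.mul_assoc]

lemma diag_transpose_mul_self_nonneg {a b : ℕ} (Y : Matrix (Fin a) (Fin b) ℝ) (i : Fin b) :
    0 ≤ (Yᵀ * Y) i i := by
  rw [Matrix.mul_apply]
  apply Finset.sum_nonneg
  intro j _
  simp only [Matrix.transpose_apply]
  exact mul_self_nonneg _

lemma trace_diagonal_mul {n : ℕ} (d : Fin n → ℝ) (N : Matrix (Fin n) (Fin n) ℝ) :
    (Matrix.diagonal d * N).trace = ∑ i, d i * N i i := by
  simp [Matrix.trace, Matrix.diag, Matrix.diagonal_mul]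

lemma frobSq_conj {n : ℕ} (W N : Matrix (Fin n) (Fin n) ℝ) (hW : Wᵀ * W = 1) :
    frobSq (W * N * Wᵀ) = frobSq N := by
  rw [frobSq_eq_trace, frobSq_eq_trace]
  have h : (W * N * Wᵀ)ᵀ * (W * N * Wᵀ) = W * (Nᵀ * N) * Wᵀ := by
    simp only [Matrix.transpose_mul, Matrix.transpose_transpose, Matrix.mul_assoc]
    rw [← Matrix.mul_assoc Wᵀ W, hW, Matrix.one_mul]
  rw [h, Matrix.trace_mul_cycle, ← Matrix.mul_assoc, hW, Matrix.one_mul]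

lemma frobSq_diagonal {n : ℕ} (d : Fin n → ℝ) :
    frobSq (Matrix.diagonal d) = ∑ i, d i ^ 2 := by
  unfold frobSq
  apply Finset.sum_congr rfl
  intro i _
  rw [Finset.sum_eq_single i]
  · simp
  · intro j _ hj; simp [Matrix.diagonal_apply_ne' _ hj]
  · simp

lemma card_ge {n k : ℕ} : ∑ i : Fin n, (if (i:ℕ) < k then (0:ℝ) else 1) = n - min k n := by
  rw [Fin.sum_univ_eq_sum_range (fun i => if i < k then (0:ℝ) else 1) n]
  have h1 : ∀ i, (if i < k then (0:ℝ) else 1) = 1 - (if i < k then 1 else 0) := by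
    intro i; split <;> ring
  simp only [h1, Finset.sum_sub_distrib, Finset.sum_const, Finset.card_range, nsmul_eq_mul,
    mul_one, Finset.sum_boole]
  have h2 : (Finset.range n).filter (fun i => i < k) = Finset.range (min k n) := by
    ext i; simp [Nat.lt_min, and_comm]
  rw [h2, Finset.card_range]

lemma weighted_tail_bound {n k : ℕ} (η c : Fin n → ℝ) (hη : Antitone η)
    (hη0 : ∀ i, 0 ≤ η i) (hc0 : ∀ i, 0 ≤ c i) (hc1 : ∀ i, c i ≤ 1)
    (hcs : (n:ℝ) - k ≤ ∑ i, c i) :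
    ∑ i : Fin n, (if (i:ℕ) < k then 0 else η i) ≤ ∑ i, η i * c i := by
  by_cases hkn : k < n
  · set t := η ⟨k, hkn⟩ with ht
    have ht0 : 0 ≤ t := hη0 _
    have key : ∀ i : Fin n,
        (if (i:ℕ) < k then (0:ℝ) else η i) - (if (i:ℕ) < k then (0:ℝ) else 1) * t
          ≤ (η i - t) * c i := by
      intro i
      by_cases hik : (i:ℕ) < k
      · simp only [hik, if_pos]
        have hti : t ≤ η i := hη (by rw [Fin.le_def]; exact le_of_lt hik)
        nlinarith [hc0 i]
      · simp only [hik, if_neg, not_false_iff, one_mul]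
        have hit : η i ≤ t := hη (by rw [Fin.le_def]; exact le_of_not_gt hik)
        nlinarith [hc1 i]
    have hsum := Finset.sum_le_sum (fun i (_ : i ∈ Finset.univ) => key i)
    rw [Finset.sum_sub_distrib] at hsum
    have e1 : ∑ i : Fin n, (if (i:ℕ) < k then (0:ℝ) else 1) * t = ((n:ℝ) - k) * t := by
      rw [← Finset.sum_mul, card_ge, min_eq_left (le_of_lt hkn)]
    have e2 : ∑ i : Fin n, (η i - t) * c i = (∑ i, η i * c i) - t * ∑ i, c i := by
      rw [Finset.mul_sum]; rw [← Finset.sum_sub_distrib]; apply Finset.sum_congr rfl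
      intro i _; ring
    rw [e1, e2] at hsum
    nlinarith [hsum, mul_le_mul_of_nonneg_left hcs ht0]
  · have hall : ∀ i : Fin n, (i:ℕ) < k := fun i => lt_of_lt_of_le i.isLt (le_of_not_gt hkn)
    simp only [hall, if_pos, Finset.sum_const_zero]
    exact Finset.sum_nonneg fun i _ => mul_nonneg (hη0 i) (hc0 i)

lemma exists_isometry_ker {n k : ℕ} (D : Matrix (Fin n) (Fin n) ℝ) (hD : D.rank ≤ k) :
    ∃ (m : ℕ) (X : Matrix (Fin n) (Fin m) ℝ), Xᵀ * X = 1 ∧ D * X = 0 ∧ (n:ℝ) - k ≤ m := by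
  set g : EuclideanSpace ℝ (Fin n) →ₗ[ℝ] (Fin n → ℝ) :=
    (D.mulVecLin).comp (WithLp.linearEquiv 2 ℝ (Fin n → ℝ)).toLinearMap with hg
  set K := LinearMap.ker g with hK
  set m := Module.finrank ℝ K with hm
  let b := stdOrthonormalBasis ℝ K
  refine ⟨m, Matrix.of (fun i j => ((b j : K) : EuclideanSpace ℝ (Fin n)) i), ?_, ?_, ?_⟩
  · ext j j'
    have horth := b.orthonormal
    rw [orthonormal_iff_ite] at horth
    have := horth j j'
    rw [Submodule.coe_inner, PiLp.inner_apply] at this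
    simp only [RCLike.inner_apply, starRingEnd_apply, star_trivial] at this
    simp only [Matrix.mul_apply, Matrix.transpose_apply, Matrix.of_apply]
    have this' : ∑ x, WithLp.ofLp (b j : EuclideanSpace ℝ (Fin n)) x *
        WithLp.ofLp (b j' : EuclideanSpace ℝ (Fin n)) x = if j = j' then 1 else 0 := by
      rw [← this]; exact Finset.sum_congr rfl (fun x _ => mul_comm _ _)
    rw [this']
    by_cases h : j = j' <;> simp [h, Matrix.one_apply]
  · ext i j
    have hker : g (b j : EuclideanSpace ℝ (Fin n)) = 0 := by
      rw [← LinearMap.mem_ker, ← hK]; exact (b j).2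
    simp only [hg, LinearMap.comp_apply, LinearEquiv.coe_coe, WithLp.linearEquiv_apply,
      Matrix.mulVecLin_apply] at hker
    simp only [Matrix.mul_apply, Matrix.of_apply, Matrix.zero_apply]
    have := congrFun hker i
    simpa [Matrix.mulVec, dotProduct] using this
  · have hrn := LinearMap.finrank_range_add_finrank_ker g
    rw [finrank_euclideanSpace_fin] at hrn
    have hrange : LinearMap.range g = LinearMap.range D.mulVecLin := by
      rw [hg, LinearMap.range_comp, LinearEquiv.range, Submodule.map_top]
    have hrk : Module.finrank ℝ (LinearMap.range g) ≤ k := by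
      rw [hrange]; exact hD
    rw [← hK, ← hm] at hrn
    have : (n:ℕ) ≤ k + m := by omega
    have := Nat.cast_le (α := ℝ) |>.mpr this
    push_cast at this
    linarith

lemma eckart_young {n k : ℕ} {M W : Matrix (Fin n) (Fin n) ℝ} {ν : Fin n → ℝ}
    (hdec : IsSpectralDecomp M W ν) (hν0 : ∀ i, 0 ≤ ν i)
    (D : Matrix (Fin n) (Fin n) ℝ) (hD : D.rank ≤ k) :
    ∑ i : Fin n, (if (i:ℕ) < k then 0 else ν i ^ 2) ≤ frobSq (M - D) := by
  obtain ⟨hW, hν, hM⟩ := hdec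
  have hWWt : W * Wᵀ = 1 := mul_eq_one_comm.mp hW
  obtain ⟨m, X, hX1, hDX, hmk⟩ := exists_isometry_ker D hD
  set E := M - D with hE
  clear_value E
  set G : Matrix (Fin n) (Fin n) ℝ := 1 - X * Xᵀ with hG
  have hGt : Gᵀ = G := by
    rw [hG]; simp [Matrix.transpose_sub, Matrix.transpose_mul]
  have hXXG : X * Xᵀ * (X * Xᵀ) = X * Xᵀ := by
    rw [Matrix.mul_assoc, ← Matrix.mul_assoc Xᵀ, hX1, Matrix.one_mul]
  have hGG : G * G = G := by
    rw [hG]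
    simp [Matrix.sub_mul, Matrix.mul_sub, hXXG]
  -- Step A
  have hA : frobSq (E * X) ≤ frobSq E := by
    have h1 : frobSq E - frobSq (E * X) = frobSq (E * G) := by
      rw [frobSq_eq_trace, frobSq_eq_trace, frobSq_eq_trace, trace_sandwich, trace_sandwich]
      have hGGt : G * Gᵀ = G := by rw [hGt, hGG]
      rw [hGGt]
      have h2 : Eᵀ * E * G = Eᵀ * E - Eᵀ * E * (X * Xᵀ) := by
        rw [hG, Matrix.mul_sub, Matrix.mul_one]
      rw [h2, Matrix.trace_sub]
    linarith [frobSq_nonneg (E * G), h1]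
  -- Step B
  have hB : E * X = M * X := by rw [hE, Matrix.sub_mul, hDX, sub_zero]
  -- Step C
  set c : Fin n → ℝ := fun i => (Wᵀ * (X * Xᵀ) * W) i i with hc
  set η : Fin n → ℝ := fun i => ν i ^ 2 with hη2
  have hMt : Mᵀ = M := by
    rw [hM]
    simp [Matrix.transpose_mul, Matrix.diagonal_transpose, Matrix.mul_assoc]
  have hdd : Matrix.diagonal ν * Matrix.diagonal ν = Matrix.diagonal η := by
    rw [Matrix.diagonal_mul_diagonal]
    congr 1
    funext i
    rw [hη2]; ring
  have hMM : Mᵀ * M = W * Matrix.diagonal η * Wᵀ := by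
    calc Mᵀ * M = (W * Matrix.diagonal ν * Wᵀ) * (W * Matrix.diagonal ν * Wᵀ) := by
          rw [hMt, hM]
      _ = W * (Matrix.diagonal ν * ((Wᵀ * W) * (Matrix.diagonal ν * Wᵀ))) := by
          simp [Matrix.mul_assoc]
      _ = W * (Matrix.diagonal ν * (Matrix.diagonal ν * Wᵀ)) := by
          rw [hW, Matrix.one_mul]
      _ = W * ((Matrix.diagonal ν * Matrix.diagonal ν) * Wᵀ) := by
          rw [Matrix.mul_assoc]
      _ = W * Matrix.diagonal η * Wᵀ := by rw [hdd, Matrix.mul_assoc]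
  have hC : frobSq (M * X) = ∑ i, η i * c i := by
    rw [frobSq_eq_trace, trace_sandwich, hMM]
    rw [show W * Matrix.diagonal η * Wᵀ * (X * Xᵀ)
        = W * (Matrix.diagonal η * (Wᵀ * (X * Xᵀ))) by simp [Matrix.mul_assoc]]
    rw [Matrix.trace_mul_comm, Matrix.mul_assoc, ← Matrix.mul_assoc (Matrix.diagonal η),
      Matrix.mul_assoc (Matrix.diagonal η), trace_diagonal_mul]
  -- Step D : properties of c
  have hc0 : ∀ i, 0 ≤ c i := by
    intro i
    have : Wᵀ * (X * Xᵀ) * W = (Xᵀ * W)ᵀ * (Xᵀ * W) := by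
      rw [Matrix.transpose_mul, Matrix.transpose_transpose]
      simp [Matrix.mul_assoc]
    rw [hc]
    simp only []
    rw [this]
    exact diag_transpose_mul_self_nonneg _ i
  have hc1 : ∀ i, c i ≤ 1 := by
    intro i
    have h1 : (G * W)ᵀ * (G * W) = Wᵀ * G * W := by
      calc (G * W)ᵀ * (G * W) = Wᵀ * (Gᵀ * (G * W)) := by
            rw [Matrix.transpose_mul, Matrix.mul_assoc]
        _ = Wᵀ * ((G * G) * W) := by rw [hGt, Matrix.mul_assoc]
        _ = Wᵀ * G * W := by rw [hGG, Matrix.mul_assoc]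
    have h2 : Wᵀ * G * W = 1 - Wᵀ * (X * Xᵀ) * W := by
      rw [hG, Matrix.mul_sub, Matrix.mul_one, Matrix.sub_mul, hW]
    have h3 : 0 ≤ (Wᵀ * G * W) i i := by rw [← h1]; exact diag_transpose_mul_self_nonneg _ i
    rw [h2] at h3
    have : ((1 : Matrix (Fin n) (Fin n) ℝ) - Wᵀ * (X * Xᵀ) * W) i i = 1 - c i := by
      simp [Matrix.sub_apply, Matrix.one_apply, hc]
    rw [this] at h3
    linarith
  have hcs : (n:ℝ) - k ≤ ∑ i, c i := by
    have e1 : ∑ i, c i = (Wᵀ * (X * Xᵀ) * W).trace := by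
      rw [Matrix.trace]; apply Finset.sum_congr rfl; intro i _; rw [hc]; rfl
    have e2 : (Wᵀ * (X * Xᵀ) * W).trace = (m : ℝ) := by
      rw [Matrix.trace_mul_cycle, ← Matrix.mul_assoc, hWWt, Matrix.one_mul,
        Matrix.trace_mul_comm, hX1]
      simp [Matrix.trace_one]
    rw [e1, e2]
    exact hmk
  have hηanti : Antitone η := by
    intro i j hij
    rw [hη2]
    exact pow_le_pow_left₀ (hν0 j) (hν hij) 2
  have hη0 : ∀ i, 0 ≤ η i := by intro i; rw [hη2]; positivity
  have final := weighted_tail_bound (k := k) η c hηanti hη0 hc0 hc1 hcs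
  calc ∑ i : Fin n, (if (i:ℕ) < k then 0 else ν i ^ 2)
      = ∑ i : Fin n, (if (i:ℕ) < k then 0 else η i) := by
        apply Finset.sum_congr rfl; intro i _; rw [hη2]
    _ ≤ ∑ i, η i * c i := final
    _ = frobSq (M * X) := hC.symm
    _ = frobSq (E * X) := by rw [hB]
    _ ≤ frobSq E := hA

lemma psd_sqrt_transpose {n : ℕ} {A : Matrix (Fin n) (Fin n) ℝ} (hA : A.PosSemidef) :
    hA.sqrtᵀ = hA.sqrt := by
  unfold Matrix.PosSemidef.sqrt
  simp [Matrix.transpose_mul, Matrix.diagonal_transpose, Matrix.star_eq_conjTranspose,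
    Matrix.conjTranspose_eq_transpose_of_trivial, Unitary.coe_star, Matrix.mul_assoc]

lemma psd_sqrt_mul_self {n : ℕ} {A : Matrix (Fin n) (Fin n) ℝ} (hA : A.PosSemidef) :
    hA.sqrt * hA.sqrt = A := by
  unfold Matrix.PosSemidef.sqrt
  set U := hA.1.eigenvectorUnitary with hUdef
  have hU : star (U : Matrix (Fin n) (Fin n) ℝ) * U = 1 := Unitary.star_mul_self_of_mem U.2
  have hD : diagonal (Real.sqrt ∘ hA.1.eigenvalues) * diagonal (Real.sqrt ∘ hA.1.eigenvalues)
      = diagonal hA.1.eigenvalues := by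
    rw [diagonal_mul_diagonal]; congr 1; funext i
    exact Real.mul_self_sqrt (hA.eigenvalues_nonneg i)
  have e : ∀ X Y : Matrix (Fin n) (Fin n) ℝ,
      (U : Matrix (Fin n) (Fin n) ℝ) * X * star (U : Matrix (Fin n) (Fin n) ℝ) *
        ((U : Matrix (Fin n) (Fin n) ℝ) * Y * star (U : Matrix (Fin n) (Fin n) ℝ))
      = (U : Matrix (Fin n) (Fin n) ℝ) * (X * Y) * star (U : Matrix (Fin n) (Fin n) ℝ) := by
    intro X Y
    simp only [Matrix.mul_assoc]
    rw [← Matrix.mul_assoc (star (U : Matrix (Fin n) (Fin n) ℝ)) (U : Matrix (Fin n) (Fin n) ℝ),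
      hU, Matrix.one_mul]
  rw [e, hD]
  have hre : (RCLike.ofReal ∘ hA.1.eigenvalues : Fin n → ℝ) = hA.1.eigenvalues := by
    funext i; simp
  conv_rhs => rw [hA.1.spectral_theorem, Unitary.conjStarAlgAut_apply]
  rw [hre]

/-- Good one-sided projections imply good Nyström approximations
(Frobenius norm): if `Q` has orthonormal columns and some rank-`≤k` matrix `C` satisfies
`‖A − QC‖_F² ≤ (1+ε)‖A − A_(k)‖_F²`, then the Nyström approximation
`Â = A^{1/2} P A^{1/2}` (with `P` the orthogonal projection onto the column space of
`A^{1/2}Q`) satisfies `‖A‖_F² − ‖Â_(k)‖_F² ≤ (1+ε)‖A − A_(k)‖_F²`. -/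
theorem frobenius_projection_to_nystrom
    (n l k : ℕ) (hk : 1 ≤ k) (hkn : k < n) (ε : ℝ) (hε : 0 ≤ ε)
    (A U : Matrix (Fin n) (Fin n) ℝ) (μ : Fin n → ℝ)
    (hA : A.PosSemidef) (hdecA : IsSpectralDecomp A U μ)
    (Q : Matrix (Fin n) (Fin l) ℝ) (hQ : Qᵀ * Q = 1)
    (C : Matrix (Fin l) (Fin n) ℝ) (hC : C.rank ≤ k)
    (hnear : frobSq (A - Q * C) ≤ (1 + ε) * frobSq (A - trunc k U μ))
    (P Ahat : Matrix (Fin n) (Fin n) ℝ)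
    (hP : IsOrthProjOnto P (hA.sqrt * Q))
    (hAhat : Ahat = hA.sqrt * P * hA.sqrt) :
    ∀ (W : Matrix (Fin n) (Fin n) ℝ) (ν : Fin n → ℝ), IsSpectralDecomp Ahat W ν →
      frobSq A - frobSq (trunc k W ν) ≤ (1 + ε) * frobSq (A - trunc k U μ) := by
  intro W ν hdec
  obtain ⟨hPt, hPP, hPM, -⟩ := hP
  obtain ⟨hW, hνanti, hAhatW⟩ := hdec
  set S := hA.sqrt with hSdef
  have hSt : Sᵀ = S := by
    exact psd_sqrt_transpose hA
  have hSS : S * S = A := psd_sqrt_mul_self hA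
  -- key identity Qᵀ * Ahat = Qᵀ * A
  have hQSP : Qᵀ * S * P = Qᵀ * S := by
    have h := congrArg Matrix.transpose hPM
    rw [Matrix.transpose_mul, hPt, Matrix.transpose_mul, hSt] at h
    rwa [Matrix.mul_assoc] at h ⊢
  have key : Qᵀ * Ahat = Qᵀ * A := by
    calc Qᵀ * Ahat = Qᵀ * S * P * S := by rw [hAhat, ← Matrix.mul_assoc, ← Matrix.mul_assoc]
      _ = Qᵀ * S * S := by rw [hQSP]
      _ = Qᵀ * A := by rw [Matrix.mul_assoc, hSS]
  -- Ahat = (P*S)ᵀ * (P*S), hence ν ≥ 0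
  have hfact : Ahat = (P * S)ᵀ * (P * S) := by
    rw [hAhat]
    calc S * P * S = S * ((P * P) * S) := by rw [hPP, Matrix.mul_assoc]
      _ = (P * S)ᵀ * (P * S) := by
          rw [Matrix.transpose_mul, hPt, hSt, Matrix.mul_assoc, Matrix.mul_assoc]
  have hWdiag : Wᵀ * Ahat * W = Matrix.diagonal ν := by
    rw [hAhatW]
    calc Wᵀ * (W * Matrix.diagonal ν * Wᵀ) * W
        = (Wᵀ * W) * Matrix.diagonal ν * (Wᵀ * W) := by simp [Matrix.mul_assoc]
      _ = Matrix.diagonal ν := by rw [hW, Matrix.one_mul, Matrix.mul_one]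
  have hν0 : ∀ i, 0 ≤ ν i := by
    intro i
    have h1 : Wᵀ * Ahat * W = (P * S * W)ᵀ * (P * S * W) := by
      rw [hfact, Matrix.transpose_mul (P * S) W]
      simp [Matrix.mul_assoc]
    have h2 : 0 ≤ ((P * S * W)ᵀ * (P * S * W)) i i := diag_transpose_mul_self_nonneg _ i
    rw [← h1, hWdiag] at h2
    simpa using h2
  -- frobSq computations
  have htrunc : frobSq (trunc k W ν) = ∑ i : Fin n, (if (i:ℕ) < k then ν i ^ 2 else 0) := by
    rw [trunc, frobSq_conj _ _ hW, frobSq_diagonal]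
    apply Finset.sum_congr rfl
    intro i _
    split <;> simp
  have hAhatF : frobSq Ahat = ∑ i, ν i ^ 2 := by
    rw [hAhatW, frobSq_conj _ _ hW, frobSq_diagonal]
  -- Eckart-Young for Ahat and D = Q * C
  have hrk : (Q * C).rank ≤ k := le_trans (Matrix.rank_mul_le_right Q C) hC
  have hEY : ∑ i : Fin n, (if (i:ℕ) < k then 0 else ν i ^ 2) ≤ frobSq (Ahat - Q * C) :=
    eckart_young ⟨hW, hνanti, hAhatW⟩ hν0 (Q * C) hrk
  -- trace identity
  have htr : ((Q * C)ᵀ * A).trace = ((Q * C)ᵀ * Ahat).trace := by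
    rw [Matrix.transpose_mul, Matrix.mul_assoc, Matrix.mul_assoc, key]
  have hid : frobSq (A - Q * C) = frobSq A - frobSq Ahat + frobSq (Ahat - Q * C) := by
    rw [frobSq_sub A (Q * C), frobSq_sub Ahat (Q * C), htr]
    ring
  -- split the sum
  have hsplit : ∑ i, ν i ^ 2
      = (∑ i : Fin n, (if (i:ℕ) < k then ν i ^ 2 else 0))
        + ∑ i : Fin n, (if (i:ℕ) < k then 0 else ν i ^ 2) := by
    rw [← Finset.sum_add_distrib]
    apply Finset.sum_congr rfl
    intro i _
    split <;> ring
  rw [htrunc]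
  have := hnear
  rw [hid] at this
  linarith [hEY, hAhatF, hsplit, this]
end

section
/- Let A be an n×n real SPSD matrix with eigenvalues λ₁ ≥ … ≥ λₙ ≥ 0, let 1 ≤ k < n, let f : [0,∞) → [0,∞) be a continuous operator monotone function with f(0) = 0, let ε ≥ 0, and let B be an n×n real SPSD matrix with ‖A − B‖₂ ≤ (1+ε)·λ_{k+1}. Then ‖f(A) − f(B)‖₂ ≤ (1+ε)·f(λ_{k+1}). -/
open Matrix BigOperators

/-! ### Auxiliary lemmas for Statement 17 -/

set_option maxHeartbeats 2000000

lemma star_eq_transpose {m : ℕ} (V : Matrix (Fin m) (Fin m) ℝ) : star V = Vᵀ := by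
  rw [← Matrix.conjTranspose_eq_transpose_of_trivial]; rfl

lemma psd_conj' {m : ℕ} {M : Matrix (Fin m) (Fin m) ℝ} (h : M.PosSemidef)
    (U : Matrix (Fin m) (Fin m) ℝ) : (U * M * Uᵀ).PosSemidef := by
  simpa [Matrix.conjTranspose_eq_transpose_of_trivial] using h.mul_mul_conjTranspose_same U

lemma psd_conj_star {m : ℕ} {M : Matrix (Fin m) (Fin m) ℝ} (h : M.PosSemidef)
    (U : Matrix (Fin m) (Fin m) ℝ) : (U * M * star U).PosSemidef := by
  rw [star_eq_transpose]; exact psd_conj' h U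

lemma psd_entry {m : ℕ} {M : Matrix (Fin m) (Fin m) ℝ} (h : M.PosSemidef) (i : Fin m) :
    0 ≤ M i i := by
  have := h.dotProduct_mulVec_nonneg (Pi.single i 1)
  simpa [Matrix.mulVec_single, dotProduct, Pi.single_apply] using this

lemma herm_of_symm {m : ℕ} {M : Matrix (Fin m) (Fin m) ℝ} (h : Mᵀ = M) : M.IsHermitian := by
  rw [Matrix.IsHermitian, Matrix.conjTranspose_eq_transpose_of_trivial, h]

lemma diag_const_eq {m : ℕ} (c : ℝ) :
    (Matrix.diagonal (fun _ : Fin m => c)) = c • (1 : Matrix (Fin m) (Fin m) ℝ) := by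
  ext i j
  rcases eq_or_ne i j with h|h
  · subst h; simp
  · simp [Matrix.diagonal_apply_ne _ h, Matrix.one_apply_ne h]

section EigBounds
variable {m : ℕ} {H : Matrix (Fin m) (Fin m) ℝ} (hH : H.IsHermitian) {c : ℝ}

lemma conj_smul_sub :
    star (hH.eigenvectorUnitary : Matrix (Fin m) (Fin m) ℝ) *
        (c • (1 : Matrix (Fin m) (Fin m) ℝ) - H) *
      (hH.eigenvectorUnitary : Matrix (Fin m) (Fin m) ℝ)
      = c • (1 : Matrix (Fin m) (Fin m) ℝ) - Matrix.diagonal hH.eigenvalues := by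
  have hsV : star (hH.eigenvectorUnitary : Matrix (Fin m) (Fin m) ℝ) *
      (hH.eigenvectorUnitary : Matrix (Fin m) (Fin m) ℝ) = 1 :=
    Matrix.UnitaryGroup.star_mul_self _
  have hdiag : star (hH.eigenvectorUnitary : Matrix (Fin m) (Fin m) ℝ) * H *
      (hH.eigenvectorUnitary : Matrix (Fin m) (Fin m) ℝ) = Matrix.diagonal hH.eigenvalues := by
    simpa using hH.conjStarAlgAut_star_eigenvectorUnitary
  rw [Matrix.mul_sub, Matrix.sub_mul, hdiag, Matrix.mul_smul, Matrix.mul_one,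
    Matrix.smul_mul, hsV]

lemma conj_smul_add :
    star (hH.eigenvectorUnitary : Matrix (Fin m) (Fin m) ℝ) *
        (c • (1 : Matrix (Fin m) (Fin m) ℝ) + H) *
      (hH.eigenvectorUnitary : Matrix (Fin m) (Fin m) ℝ)
      = c • (1 : Matrix (Fin m) (Fin m) ℝ) + Matrix.diagonal hH.eigenvalues := by
  have hsV : star (hH.eigenvectorUnitary : Matrix (Fin m) (Fin m) ℝ) *
      (hH.eigenvectorUnitary : Matrix (Fin m) (Fin m) ℝ) = 1 :=
    Matrix.UnitaryGroup.star_mul_self _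
  have hdiag : star (hH.eigenvectorUnitary : Matrix (Fin m) (Fin m) ℝ) * H *
      (hH.eigenvectorUnitary : Matrix (Fin m) (Fin m) ℝ) = Matrix.diagonal hH.eigenvalues := by
    simpa using hH.conjStarAlgAut_star_eigenvectorUnitary
  rw [Matrix.mul_add, Matrix.add_mul, hdiag, Matrix.mul_smul, Matrix.mul_one,
    Matrix.smul_mul, hsV]

lemma eig_le_of_psd (h : (c • (1 : Matrix (Fin m) (Fin m) ℝ) - H).PosSemidef) (i : Fin m) :
    hH.eigenvalues i ≤ c := by
  have hc := psd_conj_star h (star (hH.eigenvectorUnitary : Matrix (Fin m) (Fin m) ℝ))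
  rw [star_star, conj_smul_sub hH] at hc
  have := psd_entry hc i
  simpa using this

lemma eig_ge_of_psd (h : (c • (1 : Matrix (Fin m) (Fin m) ℝ) + H).PosSemidef) (i : Fin m) :
    -c ≤ hH.eigenvalues i := by
  have hc := psd_conj_star h (star (hH.eigenvectorUnitary : Matrix (Fin m) (Fin m) ℝ))
  rw [star_star, conj_smul_add hH] at hc
  have := psd_entry hc i
  simp at this
  linarith

lemma psd_of_eig_le (h : ∀ i, hH.eigenvalues i ≤ c) :
    (c • (1 : Matrix (Fin m) (Fin m) ℝ) - H).PosSemidef := by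
  set V : Matrix (Fin m) (Fin m) ℝ := (hH.eigenvectorUnitary : Matrix (Fin m) (Fin m) ℝ)
    with hV
  have hVs : V * star V = 1 :=
    mul_eq_one_comm.mp (Matrix.UnitaryGroup.star_mul_self _)
  have hspec : H = V * Matrix.diagonal hH.eigenvalues * star V := by
    simpa using hH.spectral_theorem
  have key : V * (Matrix.diagonal fun i => c - hH.eigenvalues i) * star V
      = c • (1 : Matrix (Fin m) (Fin m) ℝ) - H := by
    have hd : (Matrix.diagonal fun i => c - hH.eigenvalues i)
        = (Matrix.diagonal fun _ : Fin m => c) - Matrix.diagonal hH.eigenvalues := by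
      rw [← Matrix.diagonal_sub]
    rw [hd, diag_const_eq, Matrix.mul_sub, Matrix.sub_mul, Matrix.mul_smul, Matrix.mul_one,
      Matrix.smul_mul, hVs, ← hspec]
  rw [← key]
  exact psd_conj_star (Matrix.posSemidef_diagonal_iff.mpr fun i => by linarith [h i]) V

end EigBounds

lemma psd_tmul {m l : ℕ} (M : Matrix (Fin m) (Fin l) ℝ) : (Mᴴ * M).PosSemidef :=
  Matrix.posSemidef_conjTranspose_mul_self M

lemma eigsDesc_surj {m : ℕ} {M : Matrix (Fin m) (Fin m) ℝ} (hM : M.IsHermitian) (j : Fin m) :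
    ∃ i, eigsDesc hM i = hM.eigenvalues j := by
  refine ⟨((Tuple.sort hM.eigenvalues)⁻¹ j).rev, ?_⟩
  simp [eigsDesc, Fin.rev_rev]

lemma smul_one_sub_conj {m : ℕ} (V : Matrix (Fin m) (Fin m) ℝ) (hVs : V * star V = 1)
    (g : Fin m → ℝ) (c : ℝ) :
    c • (1 : Matrix (Fin m) (Fin m) ℝ) - V * Matrix.diagonal g * star V
      = V * Matrix.diagonal (fun i => c - g i) * star V := by
  have hd : (Matrix.diagonal fun i => c - g i)
      = (Matrix.diagonal fun _ : Fin m => c) - Matrix.diagonal g := by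
    rw [← Matrix.diagonal_sub]
  rw [hd, diag_const_eq, Matrix.mul_sub, Matrix.sub_mul, Matrix.mul_smul, Matrix.mul_one,
    Matrix.smul_mul, hVs]

/-- If the symmetric matrix `D` is sandwiched `-c•1 ⪯ D ⪯ c•1`, then `opNorm D ≤ c`. -/
lemma opNorm_le_of_sandwich {m : ℕ} {D : Matrix (Fin m) (Fin m) ℝ} (hs : Dᵀ = D) {c : ℝ}
    (hc : 0 ≤ c) (h1 : (c • (1 : Matrix (Fin m) (Fin m) ℝ) - D).PosSemidef)
    (h2 : (c • (1 : Matrix (Fin m) (Fin m) ℝ) + D).PosSemidef) : opNorm D ≤ c := by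
  have hD : D.IsHermitian := herm_of_symm hs
  set V : Matrix (Fin m) (Fin m) ℝ := (hD.eigenvectorUnitary : Matrix (Fin m) (Fin m) ℝ)
    with hV
  have hsV : star V * V = 1 := Matrix.UnitaryGroup.star_mul_self _
  have hVs : V * star V = 1 := mul_eq_one_comm.mp hsV
  have hspec : D = V * Matrix.diagonal hD.eigenvalues * star V := by
    simpa using hD.spectral_theorem
  have hsq : Dᴴ * D
      = V * Matrix.diagonal (fun i => hD.eigenvalues i * hD.eigenvalues i) * star V := by
    rw [Matrix.conjTranspose_eq_transpose_of_trivial, hs]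
    conv_lhs => rw [hspec]
    have hassoc : V * Matrix.diagonal hD.eigenvalues * star V *
        (V * Matrix.diagonal hD.eigenvalues * star V)
        = V * (Matrix.diagonal hD.eigenvalues * (star V * V) * Matrix.diagonal hD.eigenvalues)
          * star V := by
      noncomm_ring
    rw [hassoc, hsV, Matrix.mul_one, Matrix.diagonal_mul_diagonal]
  have hpsd : ((c ^ 2) • (1 : Matrix (Fin m) (Fin m) ℝ) - Dᴴ * D).PosSemidef := by
    rw [hsq, smul_one_sub_conj V hVs]
    exact psd_conj_star (Matrix.posSemidef_diagonal_iff.mpr fun i => by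
      nlinarith [eig_le_of_psd hD h1 i, eig_ge_of_psd hD h2 i]) V
  have hevsq : ∀ j, (Matrix.isHermitian_conjTranspose_mul_self D).eigenvalues j ≤ c ^ 2 :=
    eig_le_of_psd _ hpsd
  rcases Nat.eq_zero_or_pos m with hm | hm
  · subst hm
    have h0 : opNorm D = 0 := Real.iSup_of_isEmpty _
    rw [h0]; exact hc
  have : Nonempty (Fin m) := ⟨⟨0, hm⟩⟩
  refine ciSup_le fun i => ?_
  have hle : svDesc D i ≤ Real.sqrt (c ^ 2) := by
    apply Real.sqrt_le_sqrt
    obtain ⟨j, hj⟩ : ∃ j, eigsDesc (Matrix.isHermitian_conjTranspose_mul_self D) i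
        = (Matrix.isHermitian_conjTranspose_mul_self D).eigenvalues j :=
      ⟨(Tuple.sort _) i.rev, rfl⟩
    exact (le_of_eq hj).trans (hevsq j)
  calc svDesc D i ≤ Real.sqrt (c ^ 2) := hle
    _ = c := by rw [Real.sqrt_sq hc]

/-- Conversely, `opNorm D ≤ c` gives the sandwich `-c•1 ⪯ D ⪯ c•1`. -/
lemma sandwich_of_opNorm_le {m : ℕ} {D : Matrix (Fin m) (Fin m) ℝ} (hs : Dᵀ = D) {c : ℝ}
    (hc : 0 ≤ c) (h : opNorm D ≤ c) :
    (c • (1 : Matrix (Fin m) (Fin m) ℝ) - D).PosSemidef ∧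
      (c • (1 : Matrix (Fin m) (Fin m) ℝ) + D).PosSemidef := by
  have hH := Matrix.isHermitian_conjTranspose_mul_self D
  have hev : ∀ j, hH.eigenvalues j ≤ c ^ 2 := by
    intro j
    obtain ⟨i, hi⟩ := eigsDesc_surj hH j
    have hsv : svDesc D i ≤ c :=
      le_trans (le_ciSup (Set.Finite.bddAbove (Set.finite_range _)) i) h
    have h0 : 0 ≤ eigsDesc hH i := by
      rw [hi]; exact (psd_tmul D).eigenvalues_nonneg j
    have hsq : eigsDesc hH i = Real.sqrt (eigsDesc hH i) ^ 2 := (Real.sq_sqrt h0).symm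
    rw [← hi, hsq]
    exact pow_le_pow_left₀ (Real.sqrt_nonneg _) hsv 2
  have hquad : ∀ x : Fin m → ℝ, x ⬝ᵥ ((Dᴴ * D) *ᵥ x) ≤ c ^ 2 * (x ⬝ᵥ x) := by
    intro x
    have hpsd := psd_of_eig_le hH hev
    have hq := hpsd.dotProduct_mulVec_nonneg x
    simp only [Matrix.sub_mulVec, Matrix.smul_mulVec, Matrix.one_mulVec, dotProduct_sub,
      dotProduct_smul, star_trivial, smul_eq_mul] at hq
    linarith
  have habs : ∀ x : Fin m → ℝ, |x ⬝ᵥ (D *ᵥ x)| ≤ c * (x ⬝ᵥ x) := by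
    intro x
    have hxx : (0:ℝ) ≤ x ⬝ᵥ x := by
      simp only [dotProduct]
      exact Finset.sum_nonneg fun i _ => mul_self_nonneg _
    have hcs : (x ⬝ᵥ (D *ᵥ x)) ^ 2 ≤ (x ⬝ᵥ x) * ((D *ᵥ x) ⬝ᵥ (D *ᵥ x)) := by
      simpa [dotProduct, pow_two] using
        Finset.sum_mul_sq_le_sq_mul_sq Finset.univ x (D *ᵥ x)
    have hDD : (D *ᵥ x) ⬝ᵥ (D *ᵥ x) = x ⬝ᵥ ((Dᴴ * D) *ᵥ x) := by
      rw [Matrix.conjTranspose_eq_transpose_of_trivial,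
        ← Matrix.mulVec_mulVec, Matrix.dotProduct_mulVec x, Matrix.vecMul_transpose]
    have hsq2 : (x ⬝ᵥ (D *ᵥ x)) ^ 2 ≤ (c * (x ⬝ᵥ x)) ^ 2 := by
      calc (x ⬝ᵥ (D *ᵥ x)) ^ 2 ≤ (x ⬝ᵥ x) * ((D *ᵥ x) ⬝ᵥ (D *ᵥ x)) := hcs
        _ ≤ (x ⬝ᵥ x) * (c ^ 2 * (x ⬝ᵥ x)) := by
            apply mul_le_mul_of_nonneg_left _ hxx
            rw [hDD]; exact hquad x
        _ = (c * (x ⬝ᵥ x)) ^ 2 := by ring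
    calc |x ⬝ᵥ (D *ᵥ x)| = Real.sqrt ((x ⬝ᵥ (D *ᵥ x)) ^ 2) := (Real.sqrt_sq_eq_abs _).symm
      _ ≤ Real.sqrt ((c * (x ⬝ᵥ x)) ^ 2) := Real.sqrt_le_sqrt hsq2
      _ = |c * (x ⬝ᵥ x)| := Real.sqrt_sq_eq_abs _
      _ = c * (x ⬝ᵥ x) := abs_of_nonneg (mul_nonneg hc hxx)
  constructor
  · refine Matrix.PosSemidef.of_dotProduct_mulVec_nonneg (herm_of_symm ?_) fun x => ?_
    · rw [Matrix.transpose_sub, Matrix.transpose_smul, Matrix.transpose_one, hs]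
    · have hxx : (0:ℝ) ≤ x ⬝ᵥ x := by
        simp only [dotProduct]; exact Finset.sum_nonneg fun i _ => mul_self_nonneg _
      simp only [Matrix.sub_mulVec, Matrix.smul_mulVec, Matrix.one_mulVec, dotProduct_sub,
        dotProduct_smul, star_trivial, smul_eq_mul]
      have habs' := abs_le.mp (habs x)
      linarith [habs'.2]
  · refine Matrix.PosSemidef.of_dotProduct_mulVec_nonneg (herm_of_symm ?_) fun x => ?_
    · rw [Matrix.transpose_add, Matrix.transpose_smul, Matrix.transpose_one, hs]
    · simp only [Matrix.add_mulVec, Matrix.smul_mulVec, Matrix.one_mulVec, dotProduct_add,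
        dotProduct_smul, star_trivial, smul_eq_mul]
      have habs' := abs_le.mp (habs x)
      linarith [habs'.1]

lemma antitone_pair {a b : ℝ} (h : b ≤ a) : Antitone ![a, b] := by
  intro i j hij
  fin_cases i <;> fin_cases j <;> simp_all [Fin.le_def]

/-- Key scalar step: for `0 < s < u` and any `δ > 0`, `f u * (s / u) ≤ f (s + δ)`. -/
lemma key_delta {f : ℝ → ℝ} (hfmono : OperatorMonotone f) (hf0 : f 0 = 0)
    {s u δ : ℝ} (hs : 0 < s) (hsu : s < u) (hδ : 0 < δ) :
    f u * (s / u) ≤ f (s + δ) := by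
  have hu : 0 < u := hs.trans hsu
  set p : ℝ := Real.sqrt (s / u) with hp
  set q : ℝ := Real.sqrt (1 - s / u) with hq
  have hp2 : p ^ 2 = s / u := Real.sq_sqrt (by positivity)
  have hq2 : q ^ 2 = 1 - s / u := Real.sq_sqrt (by
    rw [sub_nonneg, div_le_one hu]; exact hsu.le)
  have hpq : p ^ 2 + q ^ 2 = 1 := by rw [hp2, hq2]; ring
  set c : ℝ := max (s + δ) (u * q ^ 2 + u ^ 2 * p ^ 2 * q ^ 2 / δ) with hc
  set UB : Matrix (Fin 2) (Fin 2) ℝ := !![p, q; q, -p] with hUB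
  set UC : Matrix (Fin 2) (Fin 2) ℝ := !![0, 1; 1, 0] with hUC
  set B : Matrix (Fin 2) (Fin 2) ℝ := !![u * (p * p), u * (p * q); u * (p * q), u * (q * q)]
    with hB
  set C : Matrix (Fin 2) (Fin 2) ℝ := !![s + δ, 0; 0, c] with hC
  have htB : UBᵀ = !![p, q; q, -p] := by
    ext i j; fin_cases i <;> fin_cases j <;> rfl
  have htC : UCᵀ = !![0, 1; 1, 0] := by
    ext i j; fin_cases i <;> fin_cases j <;> rfl
  have hdB : Matrix.diagonal ![u, 0] = !![u, 0; 0, 0] := by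
    ext i j; fin_cases i <;> fin_cases j <;> simp [Matrix.diagonal_apply]
  have hdC : Matrix.diagonal ![c, s + δ] = !![c, 0; 0, s + δ] := by
    ext i j; fin_cases i <;> fin_cases j <;> simp [Matrix.diagonal_apply]
  have hdecB : IsSpectralDecomp B UB ![u, 0] := by
    refine ⟨?_, antitone_pair hu.le, ?_⟩
    · rw [hUB, htB, Matrix.mul_fin_two, Matrix.one_fin_two]
      ext i j
      fin_cases i <;> fin_cases j <;> simp <;> nlinarith [hpq]
    · rw [hUB, htB, hdB, hB, Matrix.mul_fin_two, Matrix.mul_fin_two]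
      ext i j
      fin_cases i <;> fin_cases j <;> simp <;> ring
  have hdecC : IsSpectralDecomp C UC ![c, s + δ] := by
    refine ⟨?_, antitone_pair (le_max_left _ _), ?_⟩
    · rw [hUC, htC, Matrix.mul_fin_two, Matrix.one_fin_two]
      ext i j
      fin_cases i <;> fin_cases j <;> simp
    · rw [hUC, htC, hdC, hC, Matrix.mul_fin_two, Matrix.mul_fin_two]
      ext i j
      fin_cases i <;> fin_cases j <;> simp
  have hBpsd : B.PosSemidef := by
    rw [hdecB.2.2]
    refine psd_conj' (Matrix.posSemidef_diagonal_iff.mpr ?_) UB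
    intro i; fin_cases i <;> simp [hu.le]
  have hCpsd : C.PosSemidef := by
    rw [hdecC.2.2]
    refine psd_conj' (Matrix.posSemidef_diagonal_iff.mpr ?_) UC
    intro i
    have h1 : (0:ℝ) ≤ c := le_trans (by positivity) (le_max_left _ _)
    fin_cases i <;> simp [h1] <;> positivity
  have hcge : u ^ 2 * p ^ 2 * q ^ 2 / δ ≤ c - u * q ^ 2 := by
    have := le_max_right (s + δ) (u * q ^ 2 + u ^ 2 * p ^ 2 * q ^ 2 / δ)
    rw [hc]; linarith
  have hup2 : u * p ^ 2 = s := by rw [hp2]; field_simp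
  have hCB : (C - B).PosSemidef := by
    refine Matrix.PosSemidef.of_dotProduct_mulVec_nonneg ?_ ?_
    · apply herm_of_symm
      rw [Matrix.transpose_sub]
      rw [show Bᵀ = B from by ext i j; fin_cases i <;> fin_cases j <;> rfl,
        show Cᵀ = C from by ext i j; fin_cases i <;> fin_cases j <;> rfl]
    · intro y
      have expand : star y ⬝ᵥ (C - B) *ᵥ y
          = (s + δ - u * (p * p)) * y 0 ^ 2 - 2 * (u * (p * q)) * (y 0 * y 1)
            + (c - u * (q * q)) * y 1 ^ 2 := by
        simp [hC, hB, Matrix.sub_apply, Matrix.mulVec, dotProduct, Fin.sum_univ_two]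
        ring
      rw [expand]
      have h1 : (u * (p * q)) ^ 2 ≤ δ * (c - u * (q * q)) := by
        have h2b := mul_le_mul_of_nonneg_left hcge hδ.le
        calc (u * (p * q)) ^ 2 = δ * (u ^ 2 * p ^ 2 * q ^ 2 / δ) := by field_simp
          _ ≤ δ * (c - u * q ^ 2) := h2b
          _ = δ * (c - u * (q * q)) := by ring
      have h3 : s + δ - u * (p * p) = δ := by nlinarith [hup2]
      rw [h3]
      nlinarith [sq_nonneg (δ * y 0 - (u * (p * q)) * y 1), hδ, h1, sq_nonneg (y 1),
        mul_pos hδ hδ]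
  have hmain := hfmono 2 C B UC UB ![c, s + δ] ![u, 0] hdecC hdecB hCpsd hBpsd hCB
  have hfdB : Matrix.diagonal (f ∘ ![u, 0]) = !![f u, 0; 0, 0] := by
    ext i j; fin_cases i <;> fin_cases j <;> simp [Matrix.diagonal_apply, hf0]
  have hfdC : Matrix.diagonal (f ∘ ![c, s + δ]) = !![f c, 0; 0, f (s + δ)] := by
    ext i j; fin_cases i <;> fin_cases j <;> simp [Matrix.diagonal_apply]
  rw [hUC, hUB, htC, htB, hfdB, hfdC, Matrix.mul_fin_two, Matrix.mul_fin_two,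
    Matrix.mul_fin_two, Matrix.mul_fin_two] at hmain
  have h00 := psd_entry hmain 0
  simp [Matrix.sub_apply] at h00
  calc f u * (s / u) = f u * p ^ 2 := by rw [hp2]
    _ ≤ f (s + δ) := by nlinarith [h00]

lemma scalar_ratio {f : ℝ → ℝ} (hfc : ContinuousOn f (Set.Ici 0))
    (hfmono : OperatorMonotone f) (hf0 : f 0 = 0) {s u : ℝ} (h0 : 0 ≤ s) (hsu : s ≤ u) :
    s * f u ≤ u * f s := by
  rcases eq_or_lt_of_le h0 with h | hs
  · rw [← h, hf0, zero_mul, mul_zero]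
  rcases eq_or_lt_of_le hsu with h | hsu'
  · rw [h, mul_comm]
  have hu : 0 < u := hs.trans hsu'
  have hev : ∀ᶠ δ in nhdsWithin (0:ℝ) (Set.Ioi 0), f u * (s / u) ≤ f (s + δ) := by
    filter_upwards [self_mem_nhdsWithin] with δ hδ
    exact key_delta hfmono hf0 hs hsu' hδ
  have hbase : Filter.Tendsto (fun δ : ℝ => s + δ) (nhdsWithin 0 (Set.Ioi 0)) (nhds s) := by
    have h1 : Filter.Tendsto (fun δ : ℝ => s + δ) (nhds 0) (nhds (s + 0)) :=
      (continuous_const.add continuous_id).tendsto 0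
    rw [add_zero] at h1
    exact h1.mono_left nhdsWithin_le_nhds
  have hmem : ∀ᶠ δ in nhdsWithin (0:ℝ) (Set.Ioi 0), s + δ ∈ Set.Ici (0:ℝ) := by
    filter_upwards [self_mem_nhdsWithin] with δ hδ
    have hδ' : (0:ℝ) < δ := hδ
    simp only [Set.mem_Ici]
    linarith
  have hlim : Filter.Tendsto (fun δ : ℝ => f (s + δ)) (nhdsWithin 0 (Set.Ioi 0))
      (nhds (f s)) :=
    (hfc s h0).tendsto.comp
      (tendsto_nhdsWithin_of_tendsto_nhds_of_eventually_within _ hbase hmem)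
  have hkey : f u * (s / u) ≤ f s := ge_of_tendsto hlim hev
  calc s * f u = u * (f u * (s / u)) := by field_simp
    _ ≤ u * f s := mul_le_mul_of_nonneg_left hkey hu.le

lemma scalar_subadd {f : ℝ → ℝ} (hfc : ContinuousOn f (Set.Ici 0))
    (hfmono : OperatorMonotone f) (hf0 : f 0 = 0) {a b : ℝ} (ha : 0 ≤ a) (hb : 0 ≤ b) :
    f (a + b) ≤ f a + f b := by
  rcases eq_or_lt_of_le (add_nonneg ha hb) with h | hpos
  · have ha0 : a = 0 := by linarith
    have hb0 : b = 0 := by linarith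
    simp [ha0, hb0, hf0]
  · have h1 := scalar_ratio hfc hfmono hf0 ha (by linarith : a ≤ a + b)
    have h2 := scalar_ratio hfc hfmono hf0 hb (by linarith : b ≤ a + b)
    have h3 : (a + b) * f (a + b) ≤ (a + b) * (f a + f b) := by nlinarith
    exact le_of_mul_le_mul_left h3 hpos

lemma scalar_scale {f : ℝ → ℝ} (hfc : ContinuousOn f (Set.Ici 0))
    (hfmono : OperatorMonotone f) (hf0 : f 0 = 0) {lam ε : ℝ} (hl : 0 ≤ lam) (hε : 0 ≤ ε) :
    f ((1 + ε) * lam) ≤ (1 + ε) * f lam := by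
  rcases eq_or_lt_of_le hl with h | hl'
  · rw [← h, mul_zero, hf0, mul_zero]
  · have h1 := scalar_ratio hfc hfmono hf0 hl'.le (by nlinarith : lam ≤ (1 + ε) * lam)
    have h2 : lam * f ((1 + ε) * lam) ≤ lam * ((1 + ε) * f lam) := by nlinarith
    exact le_of_mul_le_mul_left h2 hl'

lemma conj_transpose_symm {n : ℕ} (U : Matrix (Fin n) (Fin n) ℝ) (d : Fin n → ℝ) :
    (U * Matrix.diagonal d * Uᵀ)ᵀ = U * Matrix.diagonal d * Uᵀ := by
  rw [Matrix.transpose_mul, Matrix.transpose_mul, Matrix.transpose_transpose,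
    Matrix.diagonal_transpose, Matrix.mul_assoc]

lemma decomp_symm {n : ℕ} {M U : Matrix (Fin n) (Fin n) ℝ} {μ : Fin n → ℝ}
    (h : IsSpectralDecomp M U μ) : Mᵀ = M := by
  rw [h.2.2, Matrix.transpose_mul, Matrix.transpose_mul, Matrix.transpose_transpose,
    Matrix.diagonal_transpose, Matrix.mul_assoc]

lemma decomp_nonneg {n : ℕ} {M U : Matrix (Fin n) (Fin n) ℝ} {μ : Fin n → ℝ}
    (h : IsSpectralDecomp M U μ) (hM : M.PosSemidef) (i : Fin n) : 0 ≤ μ i := by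
  have hD : Uᵀ * M * (Uᵀ)ᵀ = Matrix.diagonal μ := by
    rw [Matrix.transpose_transpose, h.2.2]
    calc Uᵀ * (U * Matrix.diagonal μ * Uᵀ) * U
        = (Uᵀ * U) * Matrix.diagonal μ * (Uᵀ * U) := by noncomm_ring
      _ = Matrix.diagonal μ := by rw [h.1, Matrix.one_mul, Matrix.mul_one]
  have hpsd : (Matrix.diagonal μ).PosSemidef := hD ▸ psd_conj' hM Uᵀ
  have := psd_entry hpsd i
  simpa using this

/-- One side of the perturbation bound. -/
lemma one_side {n : ℕ} {f : ℝ → ℝ} (hfmono : OperatorMonotone f)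
    (hsubadd : ∀ a b : ℝ, 0 ≤ a → 0 ≤ b → f (a + b) ≤ f a + f b) (hf0 : f 0 = 0)
    {t : ℝ} (ht : 0 ≤ t) {A B U W : Matrix (Fin n) (Fin n) ℝ} {μ β : Fin n → ℝ}
    (hA : A.PosSemidef) (hB : B.PosSemidef)
    (hdecA : IsSpectralDecomp A U μ) (hdecB : IsSpectralDecomp B W β)
    (hps : (t • (1 : Matrix (Fin n) (Fin n) ℝ) - (A - B)).PosSemidef) :
    (f t • (1 : Matrix (Fin n) (Fin n) ℝ) -
      (U * Matrix.diagonal (f ∘ μ) * Uᵀ - W * Matrix.diagonal (f ∘ β) * Wᵀ)).PosSemidef := by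
  obtain ⟨hWo, hβa, hBeq⟩ := id hdecB
  have hβnn : ∀ i, 0 ≤ β i := decomp_nonneg hdecB hB
  have hWW : W * Wᵀ = 1 := mul_eq_one_comm.mp hWo
  have hone_psd : (t • (1 : Matrix (Fin n) (Fin n) ℝ)).PosSemidef := by
    rw [← diag_const_eq]
    exact Matrix.posSemidef_diagonal_iff.mpr fun _ => ht
  have hshift : IsSpectralDecomp (B + t • (1 : Matrix (Fin n) (Fin n) ℝ)) W
      (fun i => β i + t) := by
    refine ⟨hWo, hβa.add_const t, ?_⟩
    have hd : Matrix.diagonal (fun i => β i + t)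
        = Matrix.diagonal β + Matrix.diagonal (fun _ : Fin n => t) := by
      rw [← Matrix.diagonal_add]
    rw [hd, diag_const_eq, Matrix.mul_add, Matrix.add_mul, Matrix.mul_smul, Matrix.mul_one,
      Matrix.smul_mul, hWW, ← hBeq]
  have hBt : (B + t • (1 : Matrix (Fin n) (Fin n) ℝ)).PosSemidef := hB.add hone_psd
  have hsub : ((B + t • (1 : Matrix (Fin n) (Fin n) ℝ)) - A).PosSemidef := by
    have he : (B + t • (1 : Matrix (Fin n) (Fin n) ℝ)) - A
        = t • (1 : Matrix (Fin n) (Fin n) ℝ) - (A - B) := by abel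
    rw [he]; exact hps
  have hmain := hfmono n (B + t • (1 : Matrix (Fin n) (Fin n) ℝ)) A W U
    (fun i => β i + t) μ hshift hdecA hBt hA hsub
  have hs1 : W * (f t • (1 : Matrix (Fin n) (Fin n) ℝ)) * Wᵀ
      = f t • (1 : Matrix (Fin n) (Fin n) ℝ) := by
    rw [Matrix.mul_smul, Matrix.mul_one, Matrix.smul_mul, hWW]
  have hstep : (W * Matrix.diagonal (f ∘ β) * Wᵀ + f t • (1 : Matrix (Fin n) (Fin n) ℝ)
      - W * Matrix.diagonal (f ∘ fun i => β i + t) * Wᵀ).PosSemidef := by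
    have hfun : (fun i => f (β i) + f t - f (β i + t))
        = ((f ∘ β) + (fun _ : Fin n => f t)) - (f ∘ fun i => β i + t) := by
      funext i; simp
    have hd : Matrix.diagonal (fun i => f (β i) + f t - f (β i + t))
        = Matrix.diagonal (f ∘ β) + f t • (1 : Matrix (Fin n) (Fin n) ℝ)
          - Matrix.diagonal (f ∘ fun i => β i + t) := by
      rw [hfun, ← diag_const_eq, Matrix.diagonal_add, Matrix.diagonal_sub]
      rfl
    have heq : W * (Matrix.diagonal (fun i => f (β i) + f t - f (β i + t))) * Wᵀ
        = W * Matrix.diagonal (f ∘ β) * Wᵀ + f t • (1 : Matrix (Fin n) (Fin n) ℝ)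
          - W * Matrix.diagonal (f ∘ fun i => β i + t) * Wᵀ := by
      rw [hd, Matrix.mul_sub, Matrix.sub_mul, Matrix.mul_add, Matrix.add_mul, hs1]
    rw [← heq]
    refine psd_conj' (Matrix.posSemidef_diagonal_iff.mpr fun i => ?_) W
    have := hsubadd (β i) t (hβnn i) ht
    simp only [sub_nonneg]
    linarith
  have hsum := hstep.add hmain
  have hfinal : (W * Matrix.diagonal (f ∘ β) * Wᵀ + f t • (1 : Matrix (Fin n) (Fin n) ℝ)
        - W * Matrix.diagonal (f ∘ fun i => β i + t) * Wᵀ)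
      + (W * Matrix.diagonal (f ∘ fun i => β i + t) * Wᵀ - U * Matrix.diagonal (f ∘ μ) * Uᵀ)
      = f t • (1 : Matrix (Fin n) (Fin n) ℝ) -
        (U * Matrix.diagonal (f ∘ μ) * Uᵀ - W * Matrix.diagonal (f ∘ β) * Wᵀ) := by
    abel
  rwa [hfinal] at hsum

/-- Operator-norm perturbation bound for operator monotone functions with
`f(0) = 0`: if `‖A − B‖₂ ≤ (1+ε)·λ_{k+1}(A)`, then `‖f(A) − f(B)‖₂ ≤ (1+ε)·f(λ_{k+1}(A))`. -/
theorem opMonotone_perturbation_bound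
    (n k : ℕ) (hk : 1 ≤ k) (hkn : k < n) (ε : ℝ) (hε : 0 ≤ ε)
    (A B U W : Matrix (Fin n) (Fin n) ℝ) (μ β : Fin n → ℝ)
    (hA : A.PosSemidef) (hB : B.PosSemidef)
    (hdecA : IsSpectralDecomp A U μ) (hdecB : IsSpectralDecomp B W β)
    (f : ℝ → ℝ) (hfc : ContinuousOn f (Set.Ici 0)) (hfmono : OperatorMonotone f)
    (hfnn : ∀ x : ℝ, 0 ≤ x → 0 ≤ f x) (hf0 : f 0 = 0)
    (hnear : opNorm (A - B) ≤ (1 + ε) * μ ⟨k, hkn⟩) :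
    opNorm (U * Matrix.diagonal (f ∘ μ) * Uᵀ - W * Matrix.diagonal (f ∘ β) * Wᵀ) ≤
      (1 + ε) * f (μ ⟨k, hkn⟩) := by
  have hμnn : ∀ i, 0 ≤ μ i := decomp_nonneg hdecA hA
  have hlam : 0 ≤ μ ⟨k, hkn⟩ := hμnn _
  have hεp : (0:ℝ) ≤ 1 + ε := by linarith
  have htnn : 0 ≤ (1 + ε) * μ ⟨k, hkn⟩ := mul_nonneg hεp hlam
  have hABs : (A - B)ᵀ = A - B := by
    rw [Matrix.transpose_sub, decomp_symm hdecA, decomp_symm hdecB]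
  obtain ⟨hs1, hs2⟩ := sandwich_of_opNorm_le hABs htnn hnear
  have hsubadd : ∀ a b : ℝ, 0 ≤ a → 0 ≤ b → f (a + b) ≤ f a + f b :=
    fun a b ha hb => scalar_subadd hfc hfmono hf0 ha hb
  have hone1 := one_side hfmono hsubadd hf0 htnn hA hB hdecA hdecB hs1
  have hs2' : (((1 + ε) * μ ⟨k, hkn⟩) • (1 : Matrix (Fin n) (Fin n) ℝ)
      - (B - A)).PosSemidef := by
    have he : ((1 + ε) * μ ⟨k, hkn⟩) • (1 : Matrix (Fin n) (Fin n) ℝ) - (B - A)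
        = ((1 + ε) * μ ⟨k, hkn⟩) • (1 : Matrix (Fin n) (Fin n) ℝ) + (A - B) := by abel
    rw [he]; exact hs2
  have hone2 := one_side hfmono hsubadd hf0 htnn hB hA hdecB hdecA hs2'
  have hDs : (U * Matrix.diagonal (f ∘ μ) * Uᵀ - W * Matrix.diagonal (f ∘ β) * Wᵀ)ᵀ
      = U * Matrix.diagonal (f ∘ μ) * Uᵀ - W * Matrix.diagonal (f ∘ β) * Wᵀ := by
    rw [Matrix.transpose_sub, conj_transpose_symm, conj_transpose_symm]
  have hone2' : (f ((1 + ε) * μ ⟨k, hkn⟩) • (1 : Matrix (Fin n) (Fin n) ℝ)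
      + (U * Matrix.diagonal (f ∘ μ) * Uᵀ - W * Matrix.diagonal (f ∘ β) * Wᵀ)).PosSemidef := by
    have he : f ((1 + ε) * μ ⟨k, hkn⟩) • (1 : Matrix (Fin n) (Fin n) ℝ)
        + (U * Matrix.diagonal (f ∘ μ) * Uᵀ - W * Matrix.diagonal (f ∘ β) * Wᵀ)
        = f ((1 + ε) * μ ⟨k, hkn⟩) • (1 : Matrix (Fin n) (Fin n) ℝ)
        - (W * Matrix.diagonal (f ∘ β) * Wᵀ - U * Matrix.diagonal (f ∘ μ) * Uᵀ) := by abel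
    rw [he]; exact hone2
  have hb := opNorm_le_of_sandwich hDs (hfnn _ htnn) hone1 hone2'
  calc opNorm (U * Matrix.diagonal (f ∘ μ) * Uᵀ - W * Matrix.diagonal (f ∘ β) * Wᵀ)
      ≤ f ((1 + ε) * μ ⟨k, hkn⟩) := hb
    _ ≤ (1 + ε) * f (μ ⟨k, hkn⟩) := scalar_scale hfc hfmono hf0 hlam hε
end
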